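/- Under the same assumptions as the multiplier error bound but with G_k replaced by the true gradient ∇f(X_k), the true Lagrange multiplier Y_k^true = M(X_k)(H(X_k)(∇c(X_k)⁺)ᵀc(X_k) − ∇f(X_k)) satisfies ‖Y_k^true − y_⋆‖₂ ≤ κ_y‖X_k − x_⋆‖₂ with κ_y := κ_H L_c r^{−2} + L_{∇f} r^{−1} + κ_{∇f} L_M. -/

import Mathlib

open Matrix Metric
open scoped Matrix.Norms.L2Operator

/-- View a plain tuple as an element of Euclidean space (for the `ℓ²` norm). -/
def toE {k : ℕ} (x : Fin k → ℝ) : EuclideanSpace ℝ (Fin k) := WithLp.toLp 2 x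

/-- View a Euclidean vector as a plain tuple. -/
def toV {k : ℕ} (x : EuclideanSpace ℝ (Fin k)) : Fin k → ℝ := WithLp.ofLp x

/-- Moore–Penrose pseudoinverse of a full-column-rank matrix. -/
noncomputable def Matrix.pinv {n m : ℕ} (A : Matrix (Fin n) (Fin m) ℝ) :
    Matrix (Fin m) (Fin n) ℝ :=
  (Aᵀ * A)⁻¹ * Aᵀ

lemma norm_mulVec_le {p q : ℕ} (A : Matrix (Fin p) (Fin q) ℝ) (x : EuclideanSpace ℝ (Fin q)) :
    ‖toE (A *ᵥ toV x)‖ ≤ ‖A‖ * ‖x‖ := A.l2_opNorm_mulVec x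

lemma dot_self_eq_norm_sq {k : ℕ} (x : EuclideanSpace ℝ (Fin k)) :
    toV x ⬝ᵥ toV x = ‖x‖ ^ 2 := by
  rw [← real_inner_self_eq_norm_sq]
  simp only [dotProduct, PiLp.inner_apply, toV, RCLike.inner_apply, conj_trivial, mul_comm]

lemma dot_le_norm_mul {k : ℕ} (x y : EuclideanSpace ℝ (Fin k)) :
    toV x ⬝ᵥ toV y ≤ ‖x‖ * ‖y‖ := by
  have h := real_inner_le_norm x y
  simpa [dotProduct, PiLp.inner_apply, toV, mul_comm] using h

lemma dot_AA {n m : ℕ} (A : Matrix (Fin n) (Fin m) ℝ) (w : Fin m → ℝ) :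
    (A *ᵥ w) ⬝ᵥ (A *ᵥ w) = ((Aᵀ * A) *ᵥ w) ⬝ᵥ w := by
  rw [Matrix.dotProduct_mulVec, ← Matrix.mulVec_transpose, Matrix.mulVec_mulVec]

lemma pinvT_bound {n m : ℕ} (A : Matrix (Fin n) (Fin m) ℝ) (r : ℝ) (hr : 0 < r)
    (hA : ∀ w : EuclideanSpace ℝ (Fin m), r * ‖w‖ ≤ ‖toE (A *ᵥ toV w)‖)
    (v : EuclideanSpace ℝ (Fin m)) :
    ‖toE (A.pinvᵀ *ᵥ toV v)‖ ≤ r⁻¹ * ‖v‖ := by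
  set B := Aᵀ * A with hB
  have hBsym : Bᵀ = B := by simp [hB, Matrix.transpose_mul]
  have hker : ∀ w : Fin m → ℝ, B *ᵥ w = 0 → w = 0 := by
    intro w hw
    have h1 : (A *ᵥ w) ⬝ᵥ (A *ᵥ w) = 0 := by rw [dot_AA, ← hB, hw]; simp
    have h2 : ‖toE (A *ᵥ w)‖ ^ 2 = 0 := by
      rw [← dot_self_eq_norm_sq]; simpa [toV, toE] using h1
    have h3 : ‖toE (A *ᵥ w)‖ = 0 := by
      nlinarith [norm_nonneg (toE (A *ᵥ w))]
    have h4 : r * ‖toE w‖ ≤ 0 := by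
      calc r * ‖toE w‖ ≤ ‖toE (A *ᵥ toV (toE w))‖ := hA (toE w)
        _ = 0 := h3
    have h5 : ‖toE w‖ = 0 := le_antisymm (nonpos_of_mul_nonpos_right h4 hr) (norm_nonneg _)
    have h6 : toE w = (0 : EuclideanSpace ℝ (Fin m)) := norm_eq_zero.mp h5
    simpa [toE] using congrArg WithLp.ofLp h6
  have hinj : Function.Injective B.mulVec := by
    intro a b hab
    have h : B *ᵥ (a - b) = 0 := by rw [Matrix.mulVec_sub, hab, sub_self]
    exact sub_eq_zero.mp (hker _ h)
  have hdet : IsUnit B.det := (Matrix.isUnit_iff_isUnit_det B).mp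
    (Matrix.mulVec_injective_iff_isUnit.mp hinj)
  have hpinvT : A.pinvᵀ = A * B⁻¹ := by
    rw [Matrix.pinv, Matrix.transpose_mul, Matrix.transpose_transpose,
      Matrix.transpose_nonsing_inv, hBsym]
  set w : Fin m → ℝ := B⁻¹ *ᵥ toV v with hw
  have hBw : B *ᵥ w = toV v := by
    rw [hw, Matrix.mulVec_mulVec, Matrix.mul_nonsing_inv _ hdet, Matrix.one_mulVec]
  have hgoal : A.pinvᵀ *ᵥ toV v = A *ᵥ w := by
    rw [hpinvT, ← Matrix.mulVec_mulVec]
  rw [hgoal]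
  set s := ‖toE (A *ᵥ w)‖ with hs
  have hs2 : s ^ 2 = toV v ⬝ᵥ w := by
    rw [hs, ← dot_self_eq_norm_sq (toE (A *ᵥ w))]
    simp only [toV, toE]
    rw [dot_AA, ← hB, hBw]
    rfl
  have hcs : toV v ⬝ᵥ w ≤ ‖v‖ * ‖toE w‖ := by simpa [toV, toE] using dot_le_norm_mul v (toE w)
  have hrw : r * ‖toE w‖ ≤ s := hA (toE w)
  have hwle : ‖toE w‖ ≤ r⁻¹ * s := by
    rw [le_inv_mul_iff₀ hr]; exact hrw
  have hkey : s ^ 2 ≤ ‖v‖ * (r⁻¹ * s) := by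
    calc s ^ 2 = toV v ⬝ᵥ w := hs2
      _ ≤ ‖v‖ * ‖toE w‖ := hcs
      _ ≤ ‖v‖ * (r⁻¹ * s) := mul_le_mul_of_nonneg_left hwle (norm_nonneg _)
  rcases (norm_nonneg (toE (A *ᵥ w))).eq_or_lt with h0 | h0
  · rw [hs, ← h0]
    positivity
  · have : s * s ≤ (r⁻¹ * ‖v‖) * s := by nlinarith
    exact le_of_mul_le_mul_right this h0

/-- Corollary 1 of the paper: the true Lagrange multiplier satisfies
`‖Y_k^true − y_⋆‖ ≤ κ_y ‖X_k − x_⋆‖` with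
`κ_y = κ_H L_c r⁻² + L_{∇f} r⁻¹ + κ_{∇f} L_M`. -/
theorem true_multiplier_error_bound {n m : ℕ} (hmn : m ≤ n)
    (Jc : EuclideanSpace ℝ (Fin n) → Matrix (Fin n) (Fin m) ℝ)
    (cf : EuclideanSpace ℝ (Fin n) → EuclideanSpace ℝ (Fin m))
    (gradf : EuclideanSpace ℝ (Fin n) → EuclideanSpace ℝ (Fin n))
    (M : EuclideanSpace ℝ (Fin n) → Matrix (Fin m) (Fin n) ℝ)
    (Hm : EuclideanSpace ℝ (Fin n) → Matrix (Fin n) (Fin n) ℝ)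
    (ε r Lc Lf κf κH LM : ℝ)
    (hε : 0 ≤ ε) (hr : 0 < r) (hLc : 0 < Lc) (hLf : 0 < Lf) (hκf : 0 < κf)
    (hκH : 0 < κH) (hLM : 0 < LM)
    (xstar Xk : EuclideanSpace ℝ (Fin n))
    (hXk : Xk ∈ closedBall xstar ε)
    (hcstar : cf xstar = 0)
    -- Lipschitz continuity of `c`, `∇f`, and `M` on the neighborhood
    (hcLip : ∀ x ∈ closedBall xstar ε, ∀ x' ∈ closedBall xstar ε,
      ‖cf x - cf x'‖ ≤ Lc * ‖x - x'‖)
    (hgLip : ∀ x ∈ closedBall xstar ε, ∀ x' ∈ closedBall xstar ε,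
      ‖gradf x - gradf x'‖ ≤ Lf * ‖x - x'‖)
    (hMLip : ∀ x ∈ closedBall xstar ε, ∀ x' ∈ closedBall xstar ε,
      ‖M x - M x'‖ ≤ LM * ‖x - x'‖)
    -- bounds on the neighborhood
    (hgbd : ∀ x ∈ closedBall xstar ε, ‖gradf x‖ ≤ κf)
    (hHbd : ∀ x ∈ closedBall xstar ε, ‖Hm x‖ ≤ κH)
    (hMbd : ∀ x ∈ closedBall xstar ε, ‖M x‖ ≤ r⁻¹)
    (hsmin : ∀ x ∈ closedBall xstar ε, ∀ w : EuclideanSpace ℝ (Fin m),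
      r * ‖w‖ ≤ ‖toE (Jc x *ᵥ toV w)‖)
    -- multiplier formulas
    (Yk : EuclideanSpace ℝ (Fin m)) (ystar : EuclideanSpace ℝ (Fin m))
    (hYk : Yk = toE (M Xk *ᵥ
      (Hm Xk *ᵥ ((Jc Xk).pinvᵀ *ᵥ toV (cf Xk)) - toV (gradf Xk))))
    (hystar : ystar = -toE (M xstar *ᵥ toV (gradf xstar))) :
    ‖Yk - ystar‖ ≤ (κH * Lc * r⁻¹ ^ 2 + Lf * r⁻¹ + κf * LM) * ‖Xk - xstar‖ := by
  have hxs : xstar ∈ closedBall xstar ε := mem_closedBall_self hε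
  set p : Fin n → ℝ := (Jc Xk).pinvᵀ *ᵥ toV (cf Xk) with hp
  have hD : (0:ℝ) ≤ ‖Xk - xstar‖ := norm_nonneg _
  -- decomposition
  have hdecomp : Yk - ystar =
      toE (M Xk *ᵥ (Hm Xk *ᵥ p)) +
      toE (M Xk *ᵥ (toV (gradf xstar) - toV (gradf Xk))) +
      toE ((M xstar - M Xk) *ᵥ toV (gradf xstar)) := by
    rw [hYk, hystar]
    ext i
    simp only [toE, toV, PiLp.sub_apply, PiLp.add_apply, PiLp.neg_apply,
      Matrix.mulVec_sub, Matrix.sub_mulVec, Pi.sub_apply, Pi.add_apply]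
    ring
  -- bound term 1
  have hc : ‖cf Xk‖ ≤ Lc * ‖Xk - xstar‖ := by
    have h := hcLip Xk hXk xstar hxs
    simpa [hcstar] using h
  have hpb : ‖toE p‖ ≤ r⁻¹ * ‖cf Xk‖ :=
    pinvT_bound (Jc Xk) r hr (hsmin Xk hXk) (cf Xk)
  have hb1 : ‖toE (Hm Xk *ᵥ p)‖ ≤ κH * (r⁻¹ * (Lc * ‖Xk - xstar‖)) := by
    calc ‖toE (Hm Xk *ᵥ p)‖ ≤ ‖Hm Xk‖ * ‖toE p‖ := norm_mulVec_le _ (toE p)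
      _ ≤ κH * (r⁻¹ * (Lc * ‖Xk - xstar‖)) := by
          apply mul_le_mul (hHbd Xk hXk) ?_ (norm_nonneg _) hκH.le
          calc ‖toE p‖ ≤ r⁻¹ * ‖cf Xk‖ := hpb
            _ ≤ r⁻¹ * (Lc * ‖Xk - xstar‖) :=
              mul_le_mul_of_nonneg_left hc (by positivity)
  have ht1 : ‖toE (M Xk *ᵥ (Hm Xk *ᵥ p))‖ ≤
      r⁻¹ * (κH * (r⁻¹ * (Lc * ‖Xk - xstar‖))) := by
    calc ‖toE (M Xk *ᵥ (Hm Xk *ᵥ p))‖ ≤ ‖M Xk‖ * ‖toE (Hm Xk *ᵥ p)‖ :=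
        norm_mulVec_le _ (toE (Hm Xk *ᵥ p))
      _ ≤ r⁻¹ * (κH * (r⁻¹ * (Lc * ‖Xk - xstar‖))) :=
        mul_le_mul (hMbd Xk hXk) hb1 (norm_nonneg _) (by positivity)
  -- bound term 2
  have hg : ‖gradf xstar - gradf Xk‖ ≤ Lf * ‖Xk - xstar‖ := by
    have h := hgLip xstar hxs Xk hXk
    rwa [norm_sub_rev xstar Xk] at h
  have ht2 : ‖toE (M Xk *ᵥ (toV (gradf xstar) - toV (gradf Xk)))‖ ≤
      r⁻¹ * (Lf * ‖Xk - xstar‖) := by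
    calc ‖toE (M Xk *ᵥ (toV (gradf xstar) - toV (gradf Xk)))‖
        ≤ ‖M Xk‖ * ‖gradf xstar - gradf Xk‖ :=
          norm_mulVec_le (M Xk) (gradf xstar - gradf Xk)
      _ ≤ r⁻¹ * (Lf * ‖Xk - xstar‖) :=
          mul_le_mul (hMbd Xk hXk) hg (norm_nonneg _) (by positivity)
  -- bound term 3
  have hM3 : ‖M xstar - M Xk‖ ≤ LM * ‖Xk - xstar‖ := by
    have h := hMLip xstar hxs Xk hXk
    rwa [norm_sub_rev xstar Xk] at h
  have ht3 : ‖toE ((M xstar - M Xk) *ᵥ toV (gradf xstar))‖ ≤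
      LM * ‖Xk - xstar‖ * κf := by
    calc ‖toE ((M xstar - M Xk) *ᵥ toV (gradf xstar))‖
        ≤ ‖M xstar - M Xk‖ * ‖gradf xstar‖ := norm_mulVec_le _ _
      _ ≤ LM * ‖Xk - xstar‖ * κf :=
          mul_le_mul hM3 (hgbd xstar hxs) (norm_nonneg _) (by positivity)
  have htri : ‖Yk - ystar‖ ≤
      ‖toE (M Xk *ᵥ (Hm Xk *ᵥ p))‖ +
      ‖toE (M Xk *ᵥ (toV (gradf xstar) - toV (gradf Xk)))‖ +
      ‖toE ((M xstar - M Xk) *ᵥ toV (gradf xstar))‖ := by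
    rw [hdecomp]
    exact norm_add₃_le
  have hfinal := htri.trans (by linarith : _ ≤
      r⁻¹ * (κH * (r⁻¹ * (Lc * ‖Xk - xstar‖))) + r⁻¹ * (Lf * ‖Xk - xstar‖) +
      LM * ‖Xk - xstar‖ * κf)
  calc ‖Yk - ystar‖ ≤ _ := hfinal
    _ = (κH * Lc * r⁻¹ ^ 2 + Lf * r⁻¹ + κf * LM) * ‖Xk - xstar‖ := by ring
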